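/- Let Γ be a finite subgroup of the torus (S¹)ⁿ ⊂ ℂⁿ and let y₁,…,yₙ ≥ 0 be nonnegative reals. Define Todd(a, z) = z/(1 − a·e^{−z}) (interpreted via its limit value 1 when a = 1 and z = 0, and 0 when a ≠ 1 and z = 0). Then the sum over a = (a₁,…,aₙ) ∈ Γ of the products ∏_{j=1}^n Todd(aⱼ, yⱼ) is a strictly positive real number. -/

import Mathlib

/-- The Todd function `Todd(a, y) = y / (1 - a e^{-y})`, with the degenerate values
`Todd(1, 0) = 1` and `Todd(a, 0) = 0` for `a ≠ 1`. -/
noncomputable def ToddFn (a : ℂ) (y : ℝ) : ℂ :=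
  if y = 0 then (if a = 1 then 1 else 0)
  else (y : ℂ) / (1 - a * Complex.exp (-(y : ℂ)))

/-- Auxiliary positive prefactor `G_N(y)`. -/
noncomputable def GFn (N : ℕ) (y : ℝ) : ℝ :=
  if y = 0 then 1 / N else y / (1 - Real.exp (-(N * y)))

lemma GFn_pos {N : ℕ} (hN : 0 < N) {y : ℝ} (hy : 0 ≤ y) : 0 < GFn N y := by
  unfold GFn
  split_ifs with h
  · positivity
  · have hy' : 0 < y := lt_of_le_of_ne hy (Ne.symm h)
    have h1 : Real.exp (-(N * y)) < 1 := by
      rw [Real.exp_lt_one_iff]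
      have : (0:ℝ) < N * y := by positivity
      linarith
    exact div_pos hy' (by linarith)

lemma norm_eq_one_of_pow {a : ℂ} {N : ℕ} (hN : 0 < N) (ha : a ^ N = 1) : ‖a‖ = 1 := by
  have h : ‖a‖ ^ N = 1 := by rw [← norm_pow, ha, norm_one]
  have h0 : 0 ≤ ‖a‖ := norm_nonneg a
  rcases lt_trichotomy ‖a‖ 1 with hl | he | hg
  · have := pow_lt_one₀ h0 hl hN.ne'
    linarith
  · exact he
  · have := one_lt_pow₀ hg hN.ne'
    linarith

/-- For an `N`-th root of unity `a` and `y ≥ 0`, the Todd function is a finite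
geometric sum times the positive prefactor. -/
lemma todd_eq {N : ℕ} (hN : 0 < N) {a : ℂ} (ha : a ^ N = 1) {y : ℝ} (hy : 0 ≤ y) :
    ToddFn a y = (GFn N y : ℂ) * ∑ k ∈ Finset.range N, a ^ k * Complex.exp (-(k * y : ℝ)) := by
  unfold ToddFn GFn
  by_cases h : y = 0
  · subst h
    rw [if_pos rfl, if_pos rfl]
    have hs : ∀ k ∈ Finset.range N, a ^ k * Complex.exp (-((k : ℝ) * 0 : ℝ)) = a ^ k := by
      intro k _; simp
    rw [Finset.sum_congr rfl hs]
    have hN0 : (N : ℂ) ≠ 0 := Nat.cast_ne_zero.mpr hN.ne'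
    by_cases h1 : a = 1
    · subst h1
      simp [Finset.sum_const]
      field_simp
    · rw [if_neg h1, geom_sum_eq h1, ha]
      simp
  · rw [if_neg h, if_neg h]
    have hy' : 0 < y := lt_of_le_of_ne hy (Ne.symm h)
    have hnorm : ‖a‖ = 1 := norm_eq_one_of_pow hN ha
    set z := a * Complex.exp (-(y : ℂ)) with hz
    have hzn : ‖z‖ < 1 := by
      rw [hz, norm_mul, hnorm, one_mul, Complex.norm_exp]
      simp only [Complex.neg_re, Complex.ofReal_re]
      rw [Real.exp_lt_one_iff]
      linarith
    have hz1 : z ≠ 1 := by intro hh; rw [hh] at hzn; simp at hzn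
    have hsum : ∑ k ∈ Finset.range N, a ^ k * Complex.exp (-((k : ℝ) * y : ℝ))
        = ∑ k ∈ Finset.range N, z ^ k := by
      apply Finset.sum_congr rfl
      intro k _
      rw [hz, mul_pow, ← Complex.exp_nat_mul]
      push_cast
      ring_nf
    set r := Real.exp (-(N * y)) with hr
    have hzN : z ^ N = (r : ℂ) := by
      rw [hz, mul_pow, ha, one_mul, ← Complex.exp_nat_mul, hr, Complex.ofReal_exp]
      congr 1
      push_cast
      ring
    have hlt : r < 1 := by
      rw [hr, Real.exp_lt_one_iff]
      have : (0:ℝ) < N * y := by positivity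
      linarith
    have hne1 : (1 : ℂ) - (r : ℂ) ≠ 0 := by
      intro hh
      have : ((1 - r : ℝ) : ℂ) = 0 := by push_cast; linear_combination hh
      have := Complex.ofReal_eq_zero.mp this
      linarith
    have hne2 : z - 1 ≠ 0 := sub_ne_zero.mpr hz1
    have hne3 : (1 : ℂ) - z ≠ 0 := fun hh => hne2 (by linear_combination -hh)
    rw [hsum, geom_sum_eq hz1, hzN]
    push_cast
    field_simp
    ring

/-- The sum of a `ℂ`-valued character over a finite group is the cardinality or `0`. -/
lemma char_sum_cases {G : Type*} [Group G] [Fintype G] (χ : G →* ℂ) :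
    (∑ a, χ a) = (Fintype.card G : ℂ) ∨ (∑ a, χ a) = 0 := by
  by_cases h : ∀ a, χ a = 1
  · left; simp [h]
  · right
    push_neg at h
    obtain ⟨b, hb⟩ := h
    have key : χ b * ∑ a, χ a = ∑ a, χ a := by
      rw [Finset.mul_sum]
      exact Fintype.sum_equiv (Equiv.mulLeft b) _ _ (fun a => (map_mul χ b a).symm)
    have h2 : (χ b - 1) * ∑ a, χ a = 0 := by ring_nf; linear_combination key
    rcases mul_eq_zero.mp h2 with h3 | h3
    · exact absurd (by linear_combination h3) hb
    · exact h3

/-- The character `a ↦ ∏ j, a_j ^ k_j` on `Γ`. -/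
noncomputable def chiFn (n : ℕ) (Γ : Subgroup (Fin n → Circle)) (k : Fin n → ℕ) : Γ →* ℂ where
  toFun a := ∏ j, (((a : Fin n → Circle) j : ℂ)) ^ (k j)
  map_one' := by simp
  map_mul' a b := by
    show (∏ j, (((a * b : Γ) : Fin n → Circle) j : ℂ) ^ (k j)) = _
    rw [← Finset.prod_mul_distrib]
    apply Finset.prod_congr rfl
    intro j _
    rw [Subgroup.coe_mul, Pi.mul_apply, Circle.coe_mul, mul_pow]

lemma comp_pow_card (n : ℕ) (Γ : Subgroup (Fin n → Circle)) [Fintype Γ] (a : Γ) (j : Fin n) :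
    (((a : Fin n → Circle) j : ℂ)) ^ (Fintype.card Γ) = 1 := by
  have h1 : a ^ (Fintype.card Γ) = 1 := pow_card_eq_one
  have h2 : ((a : Fin n → Circle) j) ^ (Fintype.card Γ) = 1 := by
    have h3 : ((a : Fin n → Circle) ^ (Fintype.card Γ)) j = 1 := by
      rw [← SubgroupClass.coe_pow, h1]; rfl
    rw [← h3, Pi.pow_apply]
  have h4 := map_pow Circle.coeHom ((a : Fin n → Circle) j) (Fintype.card Γ)
  rw [h2] at h4
  exact h4.symm.trans (map_one Circle.coeHom)

/-- For a finite subgroup `Γ` of the torus `(S¹)ⁿ` and nonnegative reals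
`y₁, …, yₙ`, the sum `∑_{a ∈ Γ} ∏_j Todd(aⱼ, yⱼ)` is a strictly positive real number. -/
theorem todd_sum_pos (n : ℕ) (Γ : Subgroup (Fin n → Circle)) [Fintype Γ]
    (y : Fin n → ℝ) (hy : ∀ j, 0 ≤ y j) :
    (∑ a : Γ, ∏ j, ToddFn ((a : Fin n → Circle) j : ℂ) (y j)).im = 0 ∧
    0 < (∑ a : Γ, ∏ j, ToddFn ((a : Fin n → Circle) j : ℂ) (y j)).re := by
  classical
  set N := Fintype.card Γ with hNdef
  have hN : 0 < N := Fintype.card_pos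
  set K := Fintype.piFinset (fun _ : Fin n => Finset.range N) with hK
  set ER : (Fin n → ℕ) → ℝ := fun k => ∏ j, Real.exp (-(k j * y j)) with hER
  set Sre : (Fin n → ℕ) → ℝ := fun k => (∑ a : Γ, chiFn n Γ k a).re with hSre
  have hER_pos : ∀ k, 0 < ER k := fun k => Finset.prod_pos (fun j _ => Real.exp_pos _)
  have hchar : ∀ k, (∑ a : Γ, chiFn n Γ k a) = ((Sre k : ℝ) : ℂ) ∧ 0 ≤ Sre k := by
    intro k
    rcases char_sum_cases (chiFn n Γ k) with h | h
    · have hs : Sre k = N := by rw [hSre]; simp only [h]; simp; exact hNdef.symm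
      rw [hs, h]
      exact ⟨by push_cast; rfl, by positivity⟩
    · have hs : Sre k = 0 := by rw [hSre]; simp only [h]; simp
      rw [hs, h]
      simp
  have hstep : ∀ a : Γ, (∏ j, ToddFn ((a : Fin n → Circle) j : ℂ) (y j))
      = ((∏ j, GFn N (y j) : ℝ) : ℂ) * ∑ k ∈ K, (chiFn n Γ k a) * (ER k : ℂ) := by
    intro a
    have h1 : ∀ j ∈ Finset.univ, ToddFn ((a : Fin n → Circle) j : ℂ) (y j)
        = ((GFn N (y j) : ℝ) : ℂ) * ∑ m ∈ Finset.range N,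
            ((a : Fin n → Circle) j : ℂ) ^ m * Complex.exp (-(m * y j : ℝ)) :=
      fun j _ => todd_eq hN (comp_pow_card n Γ a j) (hy j)
    rw [Finset.prod_congr rfl h1, Finset.prod_mul_distrib, Finset.prod_univ_sum,
      ← Complex.ofReal_prod]
    congr 1
    apply Finset.sum_congr rfl
    intro k hk
    rw [Finset.prod_mul_distrib]
    congr 1
    rw [hER]
    push_cast
    rfl
  have hmain : (∑ a : Γ, ∏ j, ToddFn ((a : Fin n → Circle) j : ℂ) (y j))
      = ((((∏ j, GFn N (y j)) * ∑ k ∈ K, Sre k * ER k : ℝ)) : ℂ) := by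
    rw [Finset.sum_congr rfl (fun a _ => hstep a), ← Finset.mul_sum, Finset.sum_comm]
    push_cast
    congr 1
    apply Finset.sum_congr rfl
    intro k _
    rw [← Finset.sum_mul, (hchar k).1]
  have ht0 : 0 < (∏ j, GFn N (y j)) * ∑ k ∈ K, Sre k * ER k := by
    apply mul_pos
    · exact Finset.prod_pos (fun j _ => GFn_pos hN (hy j))
    · apply Finset.sum_pos'
      · intro k _
        exact mul_nonneg (hchar k).2 (hER_pos k).le
      · refine ⟨(fun _ => 0), ?_, ?_⟩
        · rw [hK, Fintype.mem_piFinset]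
          intro j
          simpa using hN
        · have hchi0 : ∀ a : Γ, chiFn n Γ (fun _ => 0) a = 1 := by
            intro a; simp [chiFn]
          have hs0 : Sre (fun _ => 0) = N := by
            rw [hSre]
            simp only [hchi0]
            simp
            exact hNdef.symm
          rw [hs0]
          exact mul_pos (by exact_mod_cast hN) (hER_pos _)
  rw [hmain]
  exact ⟨Complex.ofReal_im _, by rw [Complex.ofReal_re]; exact ht0⟩
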